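/- Fix a positive integer a. For k = 0, …, a let G_k be the real polynomial in two variables x, y given by G_k(x,y) = ∏_{q=0}^{k−1}(1 + x + q·y) · ∏_{q=k}^{a−1}(1 − q·y), where a product over an empty range equals 1, and set H = ∑_{k=0}^{a} (−1)^{a−k} (a choose k) · G_k. Write A_{μ,ν} for the coefficient of x^μ y^ν in H. Then for all natural numbers μ, ν: if μ + 2ν < a then A_{μ,ν} = 0, and |A_{μ,ν}| ≤ 6^a · a^ν. -/

import Mathlib

open MvPolynomial

/-- The polynomial `G(k, x, y) = ∏_{0 ≤ q ≤ k-1} (1 + x + q y) · ∏_{k ≤ q ≤ a-1} (1 - q y)`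
in `ℝ[x, y]`, with `x = X 0` and `y = X 1`. -/
noncomputable def Gpoly (a k : ℕ) : MvPolynomial (Fin 2) ℝ :=
  (∏ q ∈ Finset.range k, (1 + X 0 + C (q : ℝ) * X 1)) *
  (∏ q ∈ Finset.Ico k a, (1 - C (q : ℝ) * X 1))

/-- `H = Δ^a G(0, x, y) = ∑_{k=0}^{a} (-1)^{a-k} (a choose k) G(k, x, y)`. -/
noncomputable def Hpoly (a : ℕ) : MvPolynomial (Fin 2) ℝ :=
  ∑ k ∈ Finset.range (a + 1), C ((-1 : ℝ) ^ (a - k) * (a.choose k)) * Gpoly a k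


section Aux
open Finset


/-- majorization of coefficients -/
def Maj (p q : MvPolynomial (Fin 2) ℝ) : Prop :=
  ∀ m : Fin 2 →₀ ℕ, |coeff m p| ≤ coeff m q

lemma Maj.nonneg {p q} (h : Maj p q) (m : Fin 2 →₀ ℕ) : 0 ≤ coeff m q :=
  (abs_nonneg _).trans (h m)

lemma Maj.mul {p₁ p₂ q₁ q₂} (h₁ : Maj p₁ q₁) (h₂ : Maj p₂ q₂) : Maj (p₁ * p₂) (q₁ * q₂) := by
  intro m
  rw [coeff_mul, coeff_mul]
  refine (Finset.abs_sum_le_sum_abs _ _).trans (Finset.sum_le_sum fun x _ => ?_)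
  rw [abs_mul]
  exact mul_le_mul (h₁ _) (h₂ _) (abs_nonneg _) (h₁.nonneg _)

lemma Maj.one : Maj 1 1 := by
  intro m
  rw [coeff_one]
  split <;> simp

lemma Maj.prod {ι : Type*} (s : Finset ι) (f g : ι → MvPolynomial (Fin 2) ℝ)
    (h : ∀ i ∈ s, Maj (f i) (g i)) : Maj (∏ i ∈ s, f i) (∏ i ∈ s, g i) := by
  classical
  induction s using Finset.induction with
  | empty => simpa using Maj.one
  | insert x s hx ih =>
    rw [Finset.prod_insert hx, Finset.prod_insert hx]
    exact (h _ (Finset.mem_insert_self _ _)).mul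
      (ih fun i hi => h i (Finset.mem_insert_of_mem hi))

lemma coeff_one_X_nonneg (q : ℝ) (hq : 0 ≤ q) (m : Fin 2 →₀ ℕ) :
    0 ≤ coeff m (1 + X 0 + C q * X 1 : MvPolynomial (Fin 2) ℝ) := by
  rw [coeff_add, coeff_add, coeff_C_mul]
  have h0 : (0:ℝ) ≤ coeff m (X 0 : MvPolynomial (Fin 2) ℝ) := by
    rw [coeff_X']; split <;> norm_num
  have h1 : (0:ℝ) ≤ coeff m (X 1 : MvPolynomial (Fin 2) ℝ) := by
    rw [coeff_X']; split <;> norm_num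
  have hone : (0:ℝ) ≤ coeff m (1 : MvPolynomial (Fin 2) ℝ) := by
    rw [coeff_one]; split <;> norm_num
  exact add_nonneg (add_nonneg hone h0) (mul_nonneg hq h1)

lemma maj_factor1 (q : ℝ) (hq : 0 ≤ q) :
    Maj (1 + X 0 + C q * X 1) (1 + X 0 + C q * X 1) := fun m =>
  le_of_eq (abs_of_nonneg (coeff_one_X_nonneg q hq m))

lemma maj_factor2 (q : ℝ) (hq : 0 ≤ q) :
    Maj (1 - C q * X 1) (1 + C q * X 1) := by
  intro m
  rw [coeff_sub, coeff_add, coeff_C_mul]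
  have h1 : (0:ℝ) ≤ coeff m (1 : MvPolynomial (Fin 2) ℝ) := by
    rw [coeff_one]; split <;> norm_num
  have h2 : (0:ℝ) ≤ coeff m (X 1 : MvPolynomial (Fin 2) ℝ) := by
    rw [coeff_X']; split <;> norm_num
  calc |coeff m 1 - q * coeff m (X 1)| ≤ |coeff m 1| + |q * coeff m (X 1)| := abs_sub _ _
    _ = coeff m 1 + q * coeff m (X 1) := by
        rw [abs_of_nonneg h1, abs_of_nonneg (by positivity)]

/-- single coefficient bounded by evaluation at a nonnegative point -/
lemma coeff_le_eval (r : MvPolynomial (Fin 2) ℝ) (hr : ∀ m, 0 ≤ coeff m r)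
    (z : Fin 2 → ℝ) (hz : ∀ i, 0 ≤ z i) (m : Fin 2 →₀ ℕ) :
    coeff m r * ∏ i, z i ^ m i ≤ eval z r := by
  rw [eval_eq']
  by_cases hm : m ∈ r.support
  · exact Finset.single_le_sum (f := fun d => coeff d r * ∏ i, z i ^ d i)
      (fun d _ => mul_nonneg (hr d) (Finset.prod_nonneg fun i _ => pow_nonneg (hz i) _)) hm
  · rw [MvPolynomial.notMem_support_iff.mp hm, zero_mul]
    exact Finset.sum_nonneg fun d _ =>
      mul_nonneg (hr d) (Finset.prod_nonneg fun i _ => pow_nonneg (hz i) _)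


noncomputable def Mpoly (a k : ℕ) : MvPolynomial (Fin 2) ℝ :=
  (∏ q ∈ Finset.range k, (1 + X 0 + C (q : ℝ) * X 1)) *
  (∏ q ∈ Finset.Ico k a, (1 + C (q : ℝ) * X 1))

lemma maj_G (a k : ℕ) : Maj (Gpoly a k) (Mpoly a k) := by
  refine Maj.mul (Maj.prod _ _ _ fun q _ => maj_factor1 q (Nat.cast_nonneg q)) ?_
  exact Maj.prod _ _ _ fun q _ => maj_factor2 q (Nat.cast_nonneg q)

lemma Mpoly_coeff_nonneg (a k : ℕ) (m : Fin 2 →₀ ℕ) : 0 ≤ coeff m (Mpoly a k) :=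
  (maj_G a k).nonneg m

lemma eval_Mpoly_le (a k : ℕ) (ha : 1 ≤ a) (hk : k ≤ a) :
    eval (fun i : Fin 2 => if i = 0 then 1 else (a : ℝ)⁻¹) (Mpoly a k) ≤ 3 ^ a := by
  have hapos : (0:ℝ) < a := by exact_mod_cast ha
  have key : ∀ q : ℕ, q < a → (q : ℝ) * (a:ℝ)⁻¹ ≤ 1 := by
    intro q hq
    rw [← div_eq_mul_inv, div_le_one hapos]
    exact_mod_cast hq.le
  rw [Mpoly, map_mul, map_prod, map_prod]
  have h1 : ∀ q ∈ Finset.range k,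
      eval (fun i : Fin 2 => if i = 0 then 1 else (a : ℝ)⁻¹)
        (1 + X 0 + C (q : ℝ) * X 1) ≤ 3 := by
    intro q hq
    simp only [map_add, map_mul, map_one, eval_X, eval_C, if_pos rfl]
    norm_num
    have := key q (lt_of_lt_of_le (Finset.mem_range.mp hq) hk)
    simp at this ⊢
    linarith
  have h2 : ∀ q ∈ Finset.Ico k a,
      eval (fun i : Fin 2 => if i = 0 then 1 else (a : ℝ)⁻¹)
        (1 + C (q : ℝ) * X 1) ≤ 3 := by
    intro q hq
    simp only [map_add, map_mul, map_one, eval_X, eval_C]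
    have := key q (Finset.mem_Ico.mp hq).2
    simp at this ⊢
    linarith
  have hnn : ∀ (p : MvPolynomial (Fin 2) ℝ), (∀ m, 0 ≤ coeff m p) →
      0 ≤ eval (fun i : Fin 2 => if i = 0 then 1 else (a : ℝ)⁻¹) p := by
    intro p hp
    rw [eval_eq']
    refine Finset.sum_nonneg fun d _ => mul_nonneg (hp d) (Finset.prod_nonneg fun i _ => ?_)
    split <;> positivity
  calc (∏ q ∈ Finset.range k, eval (fun i : Fin 2 => if i = 0 then 1 else (a : ℝ)⁻¹)
          (1 + X 0 + C (q : ℝ) * X 1)) *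
        ∏ q ∈ Finset.Ico k a, eval (fun i : Fin 2 => if i = 0 then 1 else (a : ℝ)⁻¹)
          (1 + C (q : ℝ) * X 1)
      ≤ (∏ _q ∈ Finset.range k, (3:ℝ)) * ∏ _q ∈ Finset.Ico k a, (3:ℝ) := by
        refine mul_le_mul (Finset.prod_le_prod (fun q _ => hnn _ (coeff_one_X_nonneg _ (Nat.cast_nonneg q))) h1)
          (Finset.prod_le_prod (fun q _ => ?_) h2) ?_ ?_
        · refine hnn _ fun m => ?_
          rw [coeff_add, coeff_C_mul]
          have h1' : (0:ℝ) ≤ coeff m (X 1 : MvPolynomial (Fin 2) ℝ) := by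
            rw [coeff_X']; split <;> norm_num
          have hone : (0:ℝ) ≤ coeff m (1 : MvPolynomial (Fin 2) ℝ) := by
            rw [coeff_one]; split <;> norm_num
          exact add_nonneg hone (mul_nonneg (Nat.cast_nonneg q) h1')
        · exact Finset.prod_nonneg fun q _ =>
            hnn _ fun m => by
              rw [coeff_add, coeff_C_mul]
              have h1' : (0:ℝ) ≤ coeff m (X 1 : MvPolynomial (Fin 2) ℝ) := by
                rw [coeff_X']; split <;> norm_num
              have hone : (0:ℝ) ≤ coeff m (1 : MvPolynomial (Fin 2) ℝ) := by
                rw [coeff_one]; split <;> norm_num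
              exact add_nonneg hone (mul_nonneg (Nat.cast_nonneg q) h1')
        · exact Finset.prod_nonneg fun q _ => by norm_num
    _ = 3 ^ a := by
        rw [Finset.prod_const, Finset.prod_const, Nat.card_Ico, ← pow_add,
          Finset.card_range, Nat.add_sub_cancel' hk]

lemma coeff_G_bound (a k μ ν : ℕ) (ha : 1 ≤ a) (hk : k ≤ a) :
    |coeff (Finsupp.single 0 μ + Finsupp.single 1 ν) (Gpoly a k)| ≤ 3 ^ a * (a:ℝ) ^ ν := by
  set m : Fin 2 →₀ ℕ := Finsupp.single 0 μ + Finsupp.single 1 ν with hm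
  have hm0 : m 0 = μ := by
    simp [hm, Finsupp.single_apply]
  have hm1 : m 1 = ν := by
    simp [hm, Finsupp.single_apply]
  have hapos : (0:ℝ) < a := by exact_mod_cast ha
  have hz : ∀ i : Fin 2, 0 ≤ (if i = 0 then 1 else (a : ℝ)⁻¹) := by
    intro i; split <;> positivity
  have h1 := coeff_le_eval (Mpoly a k) (Mpoly_coeff_nonneg a k)
      (fun i : Fin 2 => if i = 0 then 1 else (a : ℝ)⁻¹) hz m
  have hprod : (∏ i : Fin 2, (if i = 0 then 1 else (a : ℝ)⁻¹) ^ m i) = ((a:ℝ) ^ ν)⁻¹ := by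
    rw [Fin.prod_univ_two, hm0, hm1]
    norm_num [inv_pow]
  rw [hprod] at h1
  have h2 : coeff m (Mpoly a k) ≤ 3 ^ a * (a:ℝ) ^ ν := by
    have hpow : (0:ℝ) < (a:ℝ) ^ ν := by positivity
    have h3 := mul_le_mul_of_nonneg_right (h1.trans (eval_Mpoly_le a k ha hk)) hpow.le
    rw [mul_assoc, inv_mul_cancel₀ hpow.ne', mul_one] at h3
    exact h3
  exact (maj_G a k m).trans h2


lemma coeff_H_bound (a μ ν : ℕ) (ha : 1 ≤ a) :
    |coeff (Finsupp.single 0 μ + Finsupp.single 1 ν) (Hpoly a)| ≤ 6 ^ a * (a:ℝ) ^ ν := by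
  set m : Fin 2 →₀ ℕ := Finsupp.single 0 μ + Finsupp.single 1 ν with hm
  rw [Hpoly, coeff_sum]
  calc |∑ k ∈ Finset.range (a+1), coeff m (C ((-1 : ℝ) ^ (a - k) * (a.choose k)) * Gpoly a k)|
      ≤ ∑ k ∈ Finset.range (a+1),
        |coeff m (C ((-1 : ℝ) ^ (a - k) * (a.choose k)) * Gpoly a k)| :=
        Finset.abs_sum_le_sum_abs _ _
    _ ≤ ∑ k ∈ Finset.range (a+1), (a.choose k : ℝ) * (3 ^ a * (a:ℝ) ^ ν) := by
        refine Finset.sum_le_sum fun k hk => ?_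
        rw [coeff_C_mul, abs_mul, abs_mul, abs_pow, abs_neg, abs_one, one_pow, one_mul,
          abs_of_nonneg (Nat.cast_nonneg _)]
        exact mul_le_mul_of_nonneg_left
          (coeff_G_bound a k μ ν ha (Nat.lt_succ_iff.mp (Finset.mem_range.mp hk)))
          (Nat.cast_nonneg _)
    _ = (∑ k ∈ Finset.range (a+1), (a.choose k : ℝ)) * (3 ^ a * (a:ℝ) ^ ν) := by
        rw [Finset.sum_mul]
    _ = 6 ^ a * (a:ℝ) ^ ν := by
        have : (∑ k ∈ Finset.range (a+1), (a.choose k : ℝ)) = 2 ^ a := by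
          exact_mod_cast congrArg (Nat.cast : ℕ → ℝ) (Nat.sum_range_choose a)
        rw [this, ← mul_assoc, ← mul_pow]
        norm_num


/-- `p` has no monomials of weighted degree `< j`, where `x` has weight 1 and `y` weight 2. -/
def Wlt (j : ℕ) (p : MvPolynomial (Fin 2) ℝ) : Prop :=
  ∀ m : Fin 2 →₀ ℕ, m 0 + 2 * m 1 < j → coeff m p = 0

lemma Wlt.zero (p : MvPolynomial (Fin 2) ℝ) : Wlt 0 p := fun _ h => absurd h (Nat.not_lt_zero _)

lemma Wlt.mono {i j : ℕ} {p} (h : Wlt j p) (hij : i ≤ j) : Wlt i p :=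
  fun m hm => h m (lt_of_lt_of_le hm hij)

lemma Wlt.add {j : ℕ} {p q} (hp : Wlt j p) (hq : Wlt j q) : Wlt j (p + q) := by
  intro m hm; rw [coeff_add, hp m hm, hq m hm, add_zero]

lemma Wlt.nsmul {j : ℕ} {p} (n : ℕ) (hp : Wlt j p) : Wlt j (n • p) := by
  intro m hm; rw [coeff_smul, hp m hm, smul_zero]

lemma Wlt.mul {i j : ℕ} {p q} (hp : Wlt i p) (hq : Wlt j q) : Wlt (i + j) (p * q) := by
  intro m hm
  rw [coeff_mul]
  refine Finset.sum_eq_zero fun x hx => ?_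
  have hxm : x.1 + x.2 = m := Finset.HasAntidiagonal.mem_antidiagonal.mp hx
  have h0 : x.1 0 + x.2 0 = m 0 := by rw [← hxm]; simp
  have h1 : x.1 1 + x.2 1 = m 1 := by rw [← hxm]; simp
  rcases lt_or_ge (x.1 0 + 2 * x.1 1) i with h | h
  · rw [hp x.1 h, zero_mul]
  · have : x.2 0 + 2 * x.2 1 < j := by omega
    rw [hq x.2 this, mul_zero]

lemma Wlt.linear (c : ℝ) : Wlt 1 (X 0 + C c * X 1 : MvPolynomial (Fin 2) ℝ) := by
  intro m hm
  have hm0 : m 0 = 0 := by omega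
  have hm1 : m 1 = 0 := by omega
  rw [coeff_add, coeff_C_mul, coeff_X', coeff_X']
  rw [if_neg, if_neg]
  · ring
  · intro h
    have := DFunLike.congr_fun h (1 : Fin 2)
    simp [Finsupp.single_apply, hm1] at this
  · intro h
    have := DFunLike.congr_fun h (0 : Fin 2)
    simp [Finsupp.single_apply, hm0] at this

lemma Wlt.cx1 (c : ℝ) : Wlt 2 (C c * X 1 : MvPolynomial (Fin 2) ℝ) := by
  intro m hm
  have hm1 : m 1 = 0 := by omega
  rw [coeff_C_mul, coeff_X', if_neg]
  · ring
  · intro h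
    have := DFunLike.congr_fun h (1 : Fin 2)
    simp [Finsupp.single_apply, hm1] at this

noncomputable def Gfam (a b : ℕ) : ℕ → MvPolynomial (Fin 2) ℝ := fun k =>
  (∏ q ∈ Finset.range k, (1 + X 0 + C (q : ℝ) * X 1)) *
  (∏ q ∈ Finset.Ico (k + b) a, (1 - C (q : ℝ) * X 1))

/-- slope of the difference -/
noncomputable def cc (a b k : ℕ) : ℝ := if k + b < a then 2 * (k:ℝ) + (b:ℝ) else (k:ℝ)

lemma Gfam_step (a b k : ℕ) :
    Gfam a b (k + 1) - Gfam a b k = (X 0 + C (cc a b k) * X 1) * Gfam a (b + 1) k := by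
  unfold Gfam cc
  by_cases h : k + b < a
  · rw [if_pos h, Finset.prod_range_succ,
      show k + 1 + b = (k + b) + 1 by omega,
      Finset.prod_eq_prod_Ico_succ_bot h (fun q => (1 - C (q : ℝ) * X 1)),
      show k + (b + 1) = (k + b) + 1 by omega]
    have hC : (C (2 * (k:ℝ) + (b:ℝ)) : MvPolynomial (Fin 2) ℝ)
        = C ((k:ℝ)) + C (((k + b : ℕ)):ℝ) := by
      rw [← C_add]; push_cast; ring_nf
    rw [hC]
    ring
  · rw [if_neg h]
    have he : ∀ c : ℕ, k + c + b ≤ k + b + c := fun c => by omega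
    rw [Finset.Ico_eq_empty (by omega : ¬ k + b < a),
      Finset.Ico_eq_empty (by omega : ¬ k + 1 + b < a),
      Finset.Ico_eq_empty (by omega : ¬ k + (b+1) < a),
      Finset.prod_range_succ, Finset.prod_empty]
    ring

lemma fwd_shift {M : Type*} [AddCommGroup M] (v : ℕ → M) (n : ℕ) :
    ∀ k, (fwdDiff 1)^[n] (fun j => v (j + 1)) k = (fwdDiff 1)^[n] v (k + 1) := by
  induction n generalizing v with
  | zero => intro k; simp
  | succ n IH =>
    intro k
    rw [Function.iterate_succ_apply, Function.iterate_succ_apply]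
    have : fwdDiff 1 (fun j => v (j + 1)) = fun j => (fwdDiff 1 v) (j + 1) := by
      funext j; simp [fwdDiff]
    rw [this, IH]

lemma fwd_idsmul (v : ℕ → MvPolynomial (Fin 2) ℝ) (n : ℕ) :
    ∀ k, (fwdDiff 1)^[n + 1] (fun j => j • v j) k
      = k • (fwdDiff 1)^[n + 1] v k + (n + 1) • (fwdDiff 1)^[n] v (k + 1) := by
  induction n generalizing v with
  | zero =>
    intro k
    simp only [zero_add, Function.iterate_one, Function.iterate_zero, id_eq, fwdDiff,
      succ_nsmul, smul_sub, one_smul]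
    abel
  | succ n IH =>
    intro k
    have hd : fwdDiff 1 (fun j => j • v j)
        = (fun j => j • (fwdDiff 1 v) j) + fun j => v (j + 1) := by
      funext j
      simp only [fwdDiff, Pi.add_apply, succ_nsmul, smul_sub]
      abel
    rw [Function.iterate_succ_apply, hd, fwdDiff_iter_add, Pi.add_apply,
      IH (fwdDiff 1 v) k, fwd_shift,
      ← Function.iterate_succ_apply, ← Function.iterate_succ_apply]
    rw [succ_nsmul (((fwdDiff 1)^[n+1] v) (k+1)) (n+1)]
    abel

lemma fwd_congr {M : Type*} [AddCommGroup M] (n : ℕ) (f g : ℕ → M) (k : ℕ)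
    (h : ∀ i ≤ n, f (k + i) = g (k + i)) : (fwdDiff 1)^[n] f k = (fwdDiff 1)^[n] g k := by
  rw [fwdDiff_iter_eq_sum_shift, fwdDiff_iter_eq_sum_shift]
  refine Finset.sum_congr rfl fun i hi => ?_
  rw [smul_eq_mul, mul_one]
  rw [h i (Nat.lt_succ_iff.mp (Finset.mem_range.mp hi))]

lemma fwd_G (a b : ℕ) :
    fwdDiff 1 (Gfam a b) = fun k => (X 0 + C (cc a b k) * X 1) * Gfam a (b + 1) k := by
  funext k
  simpa [fwdDiff] using Gfam_step a b k

lemma lin_eq (b n : ℕ) :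
    (X 0 + C (2 * (n:ℝ) + (b:ℝ)) * X 1 : MvPolynomial (Fin 2) ℝ)
      = (X 0 + C (b:ℝ) * X 1) + n • (C 2 * X 1) := by
  rw [nsmul_eq_mul, ← C_eq_coe_nat,
    show (2 * (n:ℝ) + (b:ℝ)) = (b:ℝ) + (n:ℝ) * 2 by ring, C_add, C_mul]
  ring

lemma fwd_G_wlt (a : ℕ) : ∀ j b k, k + b + j ≤ a → Wlt j ((fwdDiff 1)^[j] (Gfam a b) k) := by
  intro j
  induction j using Nat.strong_induction_on with
  | _ j IH =>
  match j, IH with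
  | 0, _ => exact fun b k _ => Wlt.zero _
  | 1, _ =>
    intro b k hk
    rw [Function.iterate_one, fwd_G]
    have : Wlt (1 + 0) ((X 0 + C (cc a b k) * X 1) * Gfam a (b + 1) k) :=
      (Wlt.linear _).mul (Wlt.zero _)
    exact this.mono (by omega)
  | (j' + 2), IH =>
    intro b k hk
    rw [Function.iterate_succ_apply, fwd_G]
    have hcong : (fwdDiff 1)^[j' + 1] (fun k' => (X 0 + C (cc a b k') * X 1) * Gfam a (b+1) k') k
        = (fwdDiff 1)^[j' + 1]
            (((X 0 + C (b:ℝ) * X 1 : MvPolynomial (Fin 2) ℝ) • Gfam a (b+1))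
              + ((C 2 * X 1 : MvPolynomial (Fin 2) ℝ) • fun k' => k' • Gfam a (b+1) k')) k := by
      refine fwd_congr _ _ _ _ (fun i hi => ?_)
      have hlt : (k + i) + b < a := by omega
      rw [cc, if_pos hlt, lin_eq]
      simp only [Pi.add_apply, Pi.smul_apply, smul_eq_mul, add_mul, smul_mul_assoc,
        mul_smul_comm]
    rw [hcong, fwdDiff_iter_add, Pi.add_apply, fwdDiff_iter_const_smul,
      fwdDiff_iter_const_smul, Pi.smul_apply, Pi.smul_apply, fwd_idsmul]
    have h1 : Wlt (j' + 1) ((fwdDiff 1)^[j' + 1] (Gfam a (b+1)) k) :=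
      IH (j' + 1) (by omega) (b + 1) k (by omega)
    have h2 : Wlt j' ((fwdDiff 1)^[j'] (Gfam a (b+1)) (k + 1)) :=
      IH j' (by omega) (b + 1) (k + 1) (by omega)
    rw [smul_eq_mul, smul_eq_mul, mul_add]
    refine Wlt.add ?_ (Wlt.add ?_ ?_)
    · exact (((Wlt.linear ((b:ℝ))).mul h1)).mono (by omega)
    · exact (((Wlt.cx1 2).mul (Wlt.nsmul k h1))).mono (by omega)
    · exact (((Wlt.cx1 2).mul (Wlt.nsmul (j' + 1) h2))).mono (by omega)


lemma Hpoly_eq_fwd (a : ℕ) : Hpoly a = (fwdDiff 1)^[a] (Gfam a 0) 0 := by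
  rw [fwdDiff_iter_eq_sum_shift, Hpoly]
  refine Finset.sum_congr rfl fun k hk => ?_
  rw [smul_eq_mul, mul_one, zero_add, zsmul_eq_mul]
  have h1 : ((((-1 : ℤ) ^ (a - k) * (a.choose k) : ℤ)) : MvPolynomial (Fin 2) ℝ)
      = C ((((-1 : ℤ) ^ (a - k) * (a.choose k) : ℤ)) : ℝ) := (map_intCast (C : ℝ →+* MvPolynomial (Fin 2) ℝ) _).symm
  rw [h1]
  have h2 : ((((-1 : ℤ) ^ (a - k) * (a.choose k) : ℤ)) : ℝ)
      = (-1 : ℝ) ^ (a - k) * (a.choose k) := by push_cast; ring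
  rw [h2]
  have : Gpoly a k = Gfam a 0 k := by simp [Gpoly, Gfam]
  rw [this]

lemma coeff_H_vanish (a μ ν : ℕ) (h : μ + 2 * ν < a) :
    coeff (Finsupp.single 0 μ + Finsupp.single 1 ν) (Hpoly a) = 0 := by
  rw [Hpoly_eq_fwd]
  refine fwd_G_wlt a a 0 0 (by omega) _ ?_
  simp [Finsupp.single_apply]
  omega

end Aux

theorem stmt3 (a : ℕ) (ha : 1 ≤ a) (μ ν : ℕ) :
    (μ + 2 * ν < a →
      MvPolynomial.coeff (Finsupp.single 0 μ + Finsupp.single 1 ν) (Hpoly a) = 0) ∧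
    |MvPolynomial.coeff (Finsupp.single 0 μ + Finsupp.single 1 ν) (Hpoly a)| ≤
      6 ^ a * (a : ℝ) ^ ν := by
  exact ⟨fun h => coeff_H_vanish a μ ν h, coeff_H_bound a μ ν ha⟩
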